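/- arXiv:2002.00189 — 4 statements merged into one kernel-verified Lean document; each statement's English description precedes it below -/
import Mathlib

section
/- Let α_t satisfy the continuous-time mirror descent flow (d/dt)∇ψ(α_t) = −∇R_n(α_t) for least-squares risk R_n with data (x_i, y_i), i = 1,…,n, and differentiable strictly convex mirror map ψ. Fix any α' and ε > 0, and let T = 2·D_ψ(α', α_0)/ε. Then there exists t* ∈ [0, T] such that (i) R_n(α_{t*}) − R_n(α') + (1/(2n))∑_i(⟨x_i, α_{t*}⟩ − ⟨x_i, α'⟩)² ≤ ε, and (ii) for all 0 ≤ t ≤ t*, D_ψ(α', α_t) ≤ D_ψ(α', α_0). -/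
open scoped RealInnerProductSpace
open Finset Set


/-- First-order condition: a convex differentiable function lies above its tangent. -/
lemma convexOn_grad_le {E : Type*} [NormedAddCommGroup E] [InnerProductSpace ℝ E] [CompleteSpace E]
    {ψ : E → ℝ} (hc : ConvexOn ℝ Set.univ ψ) {g b : E} (hg : HasGradientAt ψ g b) (a : E) :
    ψ b + ⟪g, a - b⟫ ≤ ψ a := by
  set c : ℝ → E := fun s => b + s • (a - b) with hcdef
  have hc' : ∀ s : ℝ, HasDerivAt c (a - b) s := by
    intro s
    simpa [hcdef] using ((hasDerivAt_id s).smul_const (a - b)).const_add b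
  have h0 : c 0 = b := by simp [hcdef]
  have h1 : c 1 = a := by simp [hcdef]
  have hφ : HasDerivAt (fun s => ψ (c s)) ⟪g, a - b⟫ 0 := by
    have hg' : HasFDerivAt ψ (InnerProductSpace.toDual ℝ E g) (c 0) := by
      rw [h0]; exact hg.hasFDerivAt
    have h := hg'.comp_hasDerivAt 0 (hc' 0)
    simp only [Function.comp_def, InnerProductSpace.toDual_apply_apply] at h
    exact h
  have hφconv : ConvexOn ℝ Set.univ fun s => ψ (c s) := by
    have := hc.comp_affineMap (AffineMap.lineMap b a : ℝ →ᵃ[ℝ] E)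
    have heq : (ψ ∘ (AffineMap.lineMap b a : ℝ →ᵃ[ℝ] E)) = fun s => ψ (c s) := by
      funext s
      simp only [Function.comp, AffineMap.lineMap_apply_module, hcdef]
      congr 1
      module
    rw [heq] at this
    simpa using this
  have hslope := hφconv.le_slope_of_hasDerivAt (Set.mem_univ 0) (Set.mem_univ 1) one_pos hφ
  rw [slope_def_field] at hslope
  rw [h0, h1] at hslope
  simp at hslope
  linarith

/-- Explicit gradient of the least-squares risk. -/
lemma hasGradient_lsq {n m : ℕ} (hn : 0 < n) (x : Fin n → EuclideanSpace ℝ (Fin m))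
    (y : Fin n → ℝ) (a : EuclideanSpace ℝ (Fin m)) :
    HasGradientAt (fun b => 1 / (2 * (n : ℝ)) * ∑ i, (⟪x i, b⟫ - y i) ^ 2)
      ((1 / (n : ℝ)) • ∑ i, (⟪x i, a⟫ - y i) • x i) a := by
  have hnne : (n : ℝ) ≠ 0 := Nat.cast_ne_zero.mpr hn.ne'
  have h1 : ∀ i, HasFDerivAt (fun b : EuclideanSpace ℝ (Fin m) => ⟪x i, b⟫ - y i)
      (innerSL ℝ (x i)) a := fun i => ((innerSL ℝ (x i)).hasFDerivAt).sub_const (y i)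
  have h2 : ∀ i, HasFDerivAt (fun b : EuclideanSpace ℝ (Fin m) => (⟪x i, b⟫ - y i) ^ 2)
      ((2 * (⟪x i, a⟫ - y i)) • innerSL ℝ (x i)) a := by
    intro i
    have := (h1 i).mul (h1 i)
    have heq : (fun b : EuclideanSpace ℝ (Fin m) => (⟪x i, b⟫ - y i) ^ 2)
        = fun b => (⟪x i, b⟫ - y i) * (⟪x i, b⟫ - y i) := by funext b; ring
    rw [heq, two_mul, add_smul]
    exact this
  have h3 : HasFDerivAt (fun b : EuclideanSpace ℝ (Fin m) => ∑ i, (⟪x i, b⟫ - y i) ^ 2)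
      (∑ i, (2 * (⟪x i, a⟫ - y i)) • innerSL ℝ (x i)) a :=
    HasFDerivAt.fun_sum fun i _ => h2 i
  have h4 := h3.const_mul (1 / (2 * (n : ℝ)))
  rw [hasGradientAt_iff_hasFDerivAt]
  refine h4.congr_fderiv ?_
  ext v
  simp only [InnerProductSpace.toDual_apply_apply, ContinuousLinearMap.smul_apply,
    ContinuousLinearMap.coe_sum', Finset.sum_apply, innerSL_apply_apply, smul_eq_mul]
  rw [real_inner_smul_left, sum_inner, Finset.mul_sum, Finset.mul_sum]
  refine Finset.sum_congr rfl fun i _ => ?_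
  rw [real_inner_smul_left]
  field_simp

/-- Continuous-time early stopping theorem (Theorem 1): for mirror descent flow on
least-squares risk, with `T = 2 D_ψ(α', α_0)/ε`, there exists a stopping time `t* ∈ [0, T]`
at which the excess risk plus squared empirical distance is at most `ε`, and the iterates
stay in the Bregman ball `D_ψ(α', α_t) ≤ D_ψ(α', α_0)` up to `t*`. -/
theorem continuous_time_early_stopping {n m : ℕ} (hn : 0 < n)
    (x : Fin n → EuclideanSpace ℝ (Fin m)) (y : Fin n → ℝ)
    (Rn : EuclideanSpace ℝ (Fin m) → ℝ)
    (hRn : ∀ a, Rn a = 1 / (2 * n) * ∑ i, (⟪x i, a⟫ - y i) ^ 2)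
    (gRn : EuclideanSpace ℝ (Fin m) → EuclideanSpace ℝ (Fin m))
    (hgRn : ∀ a, HasGradientAt Rn (gRn a) a)
    (ψ : EuclideanSpace ℝ (Fin m) → ℝ)
    (gψ : EuclideanSpace ℝ (Fin m) → EuclideanSpace ℝ (Fin m))
    (hψconv : StrictConvexOn ℝ Set.univ ψ)
    (hψgrad : ∀ a, HasGradientAt ψ (gψ a) a)
    (Dψ : EuclideanSpace ℝ (Fin m) → EuclideanSpace ℝ (Fin m) → ℝ)
    (hD : ∀ a b, Dψ a b = ψ a - ψ b - ⟪gψ b, a - b⟫)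
    (α : ℝ → EuclideanSpace ℝ (Fin m)) (α'' : ℝ → EuclideanSpace ℝ (Fin m))
    (hα : ∀ t, HasDerivAt α (α'' t) t)
    (hflow : ∀ t, HasDerivAt (fun s => gψ (α s)) (-gRn (α t)) t)
    (α' : EuclideanSpace ℝ (Fin m))
    (ε : ℝ) (hε : 0 < ε)
    (T : ℝ) (hT : T = 2 * Dψ α' (α 0) / ε) :
    ∃ tstar ∈ Icc (0 : ℝ) T,
      (Rn (α tstar) - Rn α'
        + 1 / (2 * n) * ∑ i, (⟪x i, α tstar⟫ - ⟪x i, α'⟫) ^ 2 ≤ ε) ∧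
      ∀ t, 0 ≤ t → t ≤ tstar → Dψ α' (α t) ≤ Dψ α' (α 0) := by
  have hnne : (n : ℝ) ≠ 0 := Nat.cast_ne_zero.mpr hn.ne'
  set f : ℝ → ℝ := fun t => Rn (α t) - Rn α'
      + 1 / (2 * (n : ℝ)) * ∑ i, (⟪x i, α t⟫ - ⟪x i, α'⟫) ^ 2 with hfdef
  -- gradient of Rn is explicit
  have hgr : ∀ a, gRn a = (1 / (n : ℝ)) • ∑ i, (⟪x i, a⟫ - y i) • x i := by
    intro a
    refine (hgRn a).unique ?_
    have := hasGradient_lsq hn x y a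
    have heq : Rn = fun b => 1 / (2 * (n : ℝ)) * ∑ i, (⟪x i, b⟫ - y i) ^ 2 := funext hRn
    rw [heq]
    exact this
  -- key identity
  have hkey : ∀ a : EuclideanSpace ℝ (Fin m), ⟪gRn a, α' - a⟫
      = Rn α' - Rn a - 1 / (2 * (n : ℝ)) * ∑ i, (⟪x i, a⟫ - ⟪x i, α'⟫) ^ 2 := by
    intro a
    rw [hgr a, hRn, hRn, real_inner_smul_left, sum_inner]
    simp only [real_inner_smul_left, inner_sub_right]
    simp only [Finset.mul_sum, ← Finset.sum_sub_distrib]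
    refine Finset.sum_congr rfl fun i _ => ?_
    field_simp
    ring
  -- continuity facts
  have hαcont : Continuous α := by
    rw [continuous_iff_continuousAt]; exact fun t => (hα t).continuousAt
  have hRncont : Continuous Rn :=
    Differentiable.continuous fun a => (hgRn a).differentiableAt
  have hfcont : Continuous f := by
    apply Continuous.add
    · exact (hRncont.comp hαcont).sub continuous_const
    · apply Continuous.mul continuous_const
      apply continuous_finset_sum
      intro i _
      exact ((Continuous.inner continuous_const hαcont).sub continuous_const).pow 2
  -- derivative of the Lyapunov function
  have hL' : ∀ t, HasDerivAt (fun s => Dψ α' (α s)) (-(f t)) t := by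
    intro t
    have hEq : (fun s => Dψ α' (α s)) = fun s => ψ α' - ψ (α s) - ⟪gψ (α s), α' - α s⟫ :=
      funext fun s => hD α' (α s)
    rw [hEq]
    have h1 : HasDerivAt (fun s => ψ (α s)) ⟪gψ (α t), α'' t⟫ t := by
      have h := (hψgrad (α t)).hasFDerivAt.comp_hasDerivAt t (hα t)
      simp only [Function.comp_def, InnerProductSpace.toDual_apply_apply] at h
      exact h
    have hsub : HasDerivAt (fun s => α' - α s) (-(α'' t)) t := by
      exact (hα t).const_sub α'
    have h2 : HasDerivAt (fun s => ⟪gψ (α s), α' - α s⟫)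
        (⟪gψ (α t), -(α'' t)⟫ + ⟪-gRn (α t), α' - α t⟫) t := (hflow t).inner ℝ hsub
    have h3 := ((hasDerivAt_const t (ψ α')).sub h1).sub h2
    refine h3.congr_deriv ?_
    rw [hfdef]
    simp only [inner_neg_left, inner_neg_right]
    rw [hkey (α t)]
    ring
  have hLcont : Continuous fun s => Dψ α' (α s) := by
    rw [continuous_iff_continuousAt]
    exact fun t => (hL' t).continuousAt
  have hLnonneg : ∀ t, 0 ≤ Dψ α' (α t) := by
    intro t
    rw [hD]
    have := convexOn_grad_le hψconv.convexOn (hψgrad (α t)) α'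
    linarith
  have hT0 : 0 ≤ T := by
    rw [hT]
    exact div_nonneg (by linarith [hLnonneg 0]) hε.le
  have hεT : ε * T = 2 * Dψ α' (α 0) := by
    rw [hT]; field_simp
  set S : Set ℝ := Icc (0 : ℝ) T ∩ f ⁻¹' Iic ε with hSdef
  have hSclosed : IsClosed S := isClosed_Icc.inter (isClosed_Iic.preimage hfcont)
  have hSbdd : BddBelow S := ⟨0, fun t ht => ht.1.1⟩
  have hSne : S.Nonempty := by
    by_contra hne
    have hgt : ∀ t ∈ Icc (0 : ℝ) T, ε < f t := by
      intro t ht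
      by_contra h
      exact hne ⟨t, ht, le_of_not_gt h⟩
    have hTgt : ε < f T := hgt T ⟨hT0, le_refl T⟩
    have hopen : IsOpen {s : ℝ | ε < f s} := isOpen_lt continuous_const hfcont
    obtain ⟨δ, hδpos, hball⟩ := Metric.isOpen_iff.mp hopen T hTgt
    set b := T + δ / 2 with hbdef
    have hb0 : (0 : ℝ) < b := by positivity
    have hgt' : ∀ s ∈ Icc (0 : ℝ) b, ε < f s := by
      intro s hs
      by_cases hsT : s ≤ T
      · exact hgt s ⟨hs.1, hsT⟩
      · push_neg at hsT
        apply hball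
        rw [Metric.mem_ball, Real.dist_eq, abs_of_nonneg (by linarith)]
        have := hs.2
        rw [hbdef] at this
        linarith
    have hM : ∀ s, HasDerivAt (fun u => Dψ α' (α u) + ε * u) (-(f s) + ε) s := by
      intro s
      have := (hL' s).add ((hasDerivAt_id s).const_mul ε)
      simp only [id, mul_one] at this
      exact this
    have hanti : StrictAntiOn (fun u => Dψ α' (α u) + ε * u) (Icc 0 b) := by
      apply strictAntiOn_of_deriv_neg (convex_Icc 0 b)
      · exact (hLcont.add (continuous_const.mul continuous_id)).continuousOn
      · intro s hs
        rw [interior_Icc] at hs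
        rw [(hM s).deriv]
        have := hgt' s ⟨hs.1.le, hs.2.le⟩
        linarith
    have hlt := hanti ⟨le_refl 0, hb0.le⟩ ⟨hb0.le, le_refl b⟩ hb0
    simp only [mul_zero, add_zero] at hlt
    have h1 := hLnonneg b
    have h2 : ε * b = ε * T + ε * (δ / 2) := by rw [hbdef]; ring
    have h4 : ε * b < Dψ α' (α 0) := by linarith
    rw [h2] at h4
    have h5 : 0 < ε * (δ / 2) := by positivity
    linarith [hLnonneg 0]
  refine ⟨sInf S, ?_, ?_, ?_⟩
  · exact (hSclosed.csInf_mem hSne hSbdd).1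
  · exact (hSclosed.csInf_mem hSne hSbdd).2
  · intro t ht0 htt
    have htstar := hSclosed.csInf_mem hSne hSbdd
    have htstar0 : 0 ≤ sInf S := htstar.1.1
    have hanti2 : AntitoneOn (fun u => Dψ α' (α u)) (Icc 0 (sInf S)) := by
      apply antitoneOn_of_deriv_nonpos (convex_Icc _ _) hLcont.continuousOn
      · intro s hs
        exact (hL' s).differentiableAt.differentiableWithinAt
      · intro s hs
        rw [interior_Icc] at hs
        rw [(hL' s).deriv]
        have hsnot : s ∉ S := notMem_of_lt_csInf hs.2 hSbdd
        have hsIcc : s ∈ Icc (0 : ℝ) T := ⟨hs.1.le, hs.2.le.trans htstar.1.2⟩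
        have : ε < f s := by
          by_contra h
          exact hsnot ⟨hsIcc, le_of_not_gt h⟩
        linarith
    exact hanti2 ⟨le_refl 0, htstar0⟩ ⟨ht0, htt⟩ ht0
end

section
/- Under the same flow as in the continuous-time theorem, the Bregman divergence t ↦ D_ψ(α', α_t) is nonincreasing on any interval where R_n(α_t) ≥ R_n(α'); in particular, if α' is a global minimizer of R_n, then D_ψ(α', α_t) is nonincreasing for all t ≥ 0. -/
open scoped RealInnerProductSpace
open Finset Set

/-- First-order convexity inequality for the quadratic risk, via its (hypothesized) gradient. -/
lemma grad_ineq {n m : ℕ} (hn : 0 < n)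
    (x : Fin n → EuclideanSpace ℝ (Fin m)) (y : Fin n → ℝ)
    (Rn : EuclideanSpace ℝ (Fin m) → ℝ)
    (hRn : ∀ a, Rn a = 1 / (2 * n) * ∑ i, (⟪x i, a⟫ - y i) ^ 2)
    (gRn : EuclideanSpace ℝ (Fin m) → EuclideanSpace ℝ (Fin m))
    (hgRn : ∀ a, HasGradientAt Rn (gRn a) a)
    (a β : EuclideanSpace ℝ (Fin m)) :
    ⟪gRn a, β - a⟫ ≤ Rn β - Rn a := by
  set d : Fin n → ℝ := fun i => ⟪x i, β - a⟫ with hd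
  -- the curve s ↦ a + s • (β - a)
  have hc : HasDerivAt (fun s : ℝ => a + s • (β - a)) (β - a) 0 := by
    simpa using ((hasDerivAt_id (0:ℝ)).smul_const (β - a)).const_add a
  have h1 : HasDerivAt (fun s : ℝ => Rn (a + s • (β - a))) ⟪gRn a, β - a⟫ 0 := by
    have hga : HasFDerivAt Rn ((InnerProductSpace.toDual ℝ (EuclideanSpace ℝ (Fin m))) (gRn a))
        (a + (0:ℝ) • (β - a)) := by simpa using (hgRn a).hasFDerivAt
    have := hga.comp_hasDerivAt 0 hc
    simp [InnerProductSpace.toDual_apply_apply] at this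
    exact this
  -- explicit polynomial form
  have hfun : (fun s : ℝ => Rn (a + s • (β - a))) =
      fun s : ℝ => 1 / (2 * n) * ∑ i, ((⟪x i, a⟫ - y i) + s * d i) ^ 2 := by
    funext s
    rw [hRn]
    congr 1
    refine Finset.sum_congr rfl fun i _ => ?_
    rw [inner_add_right, real_inner_smul_right]
    ring
  have h2 : HasDerivAt (fun s : ℝ => Rn (a + s • (β - a)))
      (1 / (2 * n) * ∑ i, (2 * (⟪x i, a⟫ - y i) * d i)) 0 := by
    rw [hfun]
    have : ∀ i : Fin n, HasDerivAt (fun s : ℝ => ((⟪x i, a⟫ - y i) + s * d i) ^ 2)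
        (2 * (⟪x i, a⟫ - y i) * d i) 0 := by
      intro i
      have hb : HasDerivAt (fun s : ℝ => (⟪x i, a⟫ - y i) + s * d i) (d i) 0 := by
        simpa using (hasDerivAt_mul_const (d i)).const_add (⟪x i, a⟫ - y i)
      have := hb.pow 2
      simp at this
      exact this
    simpa using (HasDerivAt.fun_sum (fun i _ => this i)).const_mul (1 / (2 * (n:ℝ)))
  have heq : ⟪gRn a, β - a⟫ = 1 / (2 * n) * ∑ i, (2 * (⟪x i, a⟫ - y i) * d i) :=
    h1.unique h2
  rw [heq, hRn, hRn]
  rw [← mul_sub, ← Finset.sum_sub_distrib]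
  have hcpos : (0:ℝ) ≤ 1 / (2 * n) := by positivity
  refine mul_le_mul_of_nonneg_left (Finset.sum_le_sum fun i _ => ?_) hcpos
  have hb : ⟪x i, β⟫ = ⟪x i, a⟫ + d i := by
    rw [hd]; simp [inner_sub_right]
  rw [hb]
  nlinarith [sq_nonneg (d i)]

/-- Along the mirror descent flow, `t ↦ D_ψ(α', α_t)` is nonincreasing on any interval where
`R_n(α_t) ≥ R_n(α')`; in particular, if `α'` is a global minimizer of `R_n`, it is
nonincreasing on all of `[0, ∞)`. -/
theorem bregman_potential_antitone {n m : ℕ} (hn : 0 < n)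
    (x : Fin n → EuclideanSpace ℝ (Fin m)) (y : Fin n → ℝ)
    (Rn : EuclideanSpace ℝ (Fin m) → ℝ)
    (hRn : ∀ a, Rn a = 1 / (2 * n) * ∑ i, (⟪x i, a⟫ - y i) ^ 2)
    (gRn : EuclideanSpace ℝ (Fin m) → EuclideanSpace ℝ (Fin m))
    (hgRn : ∀ a, HasGradientAt Rn (gRn a) a)
    (ψ : EuclideanSpace ℝ (Fin m) → ℝ)
    (gψ : EuclideanSpace ℝ (Fin m) → EuclideanSpace ℝ (Fin m))
    (hψconv : StrictConvexOn ℝ Set.univ ψ)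
    (hψgrad : ∀ a, HasGradientAt ψ (gψ a) a)
    (Dψ : EuclideanSpace ℝ (Fin m) → EuclideanSpace ℝ (Fin m) → ℝ)
    (hD : ∀ a b, Dψ a b = ψ a - ψ b - ⟪gψ b, a - b⟫)
    (α : ℝ → EuclideanSpace ℝ (Fin m)) (α'' : ℝ → EuclideanSpace ℝ (Fin m))
    (hα : ∀ t, HasDerivAt α (α'' t) t)
    (hflow : ∀ t, HasDerivAt (fun s => gψ (α s)) (-gRn (α t)) t)
    (α' : EuclideanSpace ℝ (Fin m)) :
    (∀ a b : ℝ, (∀ t ∈ Icc a b, Rn α' ≤ Rn (α t)) →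
      AntitoneOn (fun t => Dψ α' (α t)) (Icc a b)) ∧
    ((∀ β : EuclideanSpace ℝ (Fin m), Rn α' ≤ Rn β) →
      AntitoneOn (fun t => Dψ α' (α t)) (Ici 0)) := by
  -- derivative of the Bregman potential
  have hderiv : ∀ t, HasDerivAt (fun s => Dψ α' (α s)) ⟪gRn (α t), α' - α t⟫ t := by
    intro t
    have hψα : HasDerivAt (fun s => ψ (α s)) ⟪gψ (α t), α'' t⟫ t := by
      have := ((hψgrad (α t)).hasFDerivAt).comp_hasDerivAt t (hα t)
      simp [InnerProductSpace.toDual_apply_apply] at this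
      exact this
    have hγ : HasDerivAt (fun s => α' - α s) (-(α'' t)) t := (hα t).const_sub α'
    have hinner : HasDerivAt (fun s => ⟪gψ (α s), α' - α s⟫)
        (⟪gψ (α t), -(α'' t)⟫ + ⟪-gRn (α t), α' - α t⟫) t :=
      HasDerivAt.inner ℝ (hflow t) hγ
    have h : HasDerivAt (fun s => ψ α' - ψ (α s) - ⟪gψ (α s), α' - α s⟫)
        (-⟪gψ (α t), α'' t⟫ - (⟪gψ (α t), -(α'' t)⟫ + ⟪-gRn (α t), α' - α t⟫)) t :=
      (hψα.const_sub (ψ α')).sub hinner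
    have hsimp : -⟪gψ (α t), α'' t⟫ - (⟪gψ (α t), -(α'' t)⟫ + ⟪-gRn (α t), α' - α t⟫)
        = ⟪gRn (α t), α' - α t⟫ := by
      rw [inner_neg_right, inner_neg_left]; ring
    rw [hsimp] at h
    have hfun : (fun s => Dψ α' (α s)) = fun s => ψ α' - ψ (α s) - ⟪gψ (α s), α' - α s⟫ := by
      funext s; rw [hD]
    rw [hfun]
    exact h
  have key : ∀ a b : ℝ, (∀ t ∈ Icc a b, Rn α' ≤ Rn (α t)) →
      AntitoneOn (fun t => Dψ α' (α t)) (Icc a b) := by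
    intro a b hab
    apply antitoneOn_of_deriv_nonpos (convex_Icc a b)
    · exact Continuous.continuousOn (by
        have : ∀ t, DifferentiableAt ℝ (fun s => Dψ α' (α s)) t :=
          fun t => (hderiv t).differentiableAt
        exact (Differentiable.continuous (fun t => this t)))
    · intro t _
      exact (hderiv t).differentiableAt.differentiableWithinAt
    · intro t ht
      rw [(hderiv t).deriv]
      have := grad_ineq hn x y Rn hRn gRn hgRn (α t) α'
      have ht' : t ∈ Icc a b := interior_subset ht
      linarith [hab t ht']
  refine ⟨key, fun hmin => ?_⟩
  intro s hs t ht hst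
  exact key s t (fun u _ => hmin (α u)) ⟨le_rfl, hst⟩ ⟨hst, le_rfl⟩ hst
end

section
/- Let X ∈ ℝ^{n×m}, y ∈ ℝ^n, R_n(α) = (1/(2n))‖Xα − y‖₂², and consider gradient descent α_{t+1} = α_t − η∇R_n(α_t) with 0 < η ≤ n/λ_max(XᵀX). Fix any α' and ε > 0, and let T = ⌈(‖α' − α_0‖₂²/2 + ηR_n(α'))/(ηε)⌉. Then there exists t* ∈ {0,…,T} such that R_n(α_{t*}) − R_n(α') + (1/(2n))‖Xα_{t*} − Xα'‖₂² ≤ ε, and for all 1 ≤ t ≤ t*, ‖α' − α_t‖₂²/2 ≤ ‖α' − α_0‖₂²/2 + ηR_n(α'). -/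
open scoped RealInnerProductSpace
open Finset Matrix

noncomputable def gdRow {n m : ℕ} (X : Matrix (Fin n) (Fin m) ℝ) (i : Fin n) :
    EuclideanSpace ℝ (Fin m) := (WithLp.equiv 2 _).symm (X i)

lemma gdRow_inner {n m : ℕ} (X : Matrix (Fin n) (Fin m) ℝ) (i : Fin n)
    (v : EuclideanSpace ℝ (Fin m)) : ⟪gdRow X i, v⟫ = X.mulVec v i := by
  simp [gdRow, PiLp.inner_apply, Matrix.mulVec, dotProduct, RCLike.inner_apply, mul_comm]

noncomputable def gdGrad {n m : ℕ} (X : Matrix (Fin n) (Fin m) ℝ) (y : Fin n → ℝ)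
    (a : EuclideanSpace ℝ (Fin m)) : EuclideanSpace ℝ (Fin m) :=
  (n : ℝ)⁻¹ • ∑ i, (X.mulVec a i - y i) • gdRow X i

lemma gd_hasGradient {n m : ℕ} (X : Matrix (Fin n) (Fin m) ℝ) (y : Fin n → ℝ)
    (a : EuclideanSpace ℝ (Fin m)) :
    HasGradientAt (fun b : EuclideanSpace ℝ (Fin m) => 1 / (2 * n) * ∑ i, (X.mulVec b i - y i) ^ 2)
      (gdGrad X y a) a := by
  have hF : ∀ i : Fin n, HasFDerivAt (fun b : EuclideanSpace ℝ (Fin m) => (X.mulVec b i - y i) ^ 2)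
      ((2 * (X.mulVec a i - y i)) • innerSL ℝ (gdRow X i)) a := by
    intro i
    have h0 : HasFDerivAt (fun b : EuclideanSpace ℝ (Fin m) => X.mulVec b i - y i)
        (innerSL ℝ (gdRow X i)) a := by
      have he : (fun b : EuclideanSpace ℝ (Fin m) => X.mulVec b i - y i)
          = fun b => ⟪gdRow X i, b⟫ - y i := by
        funext b; rw [gdRow_inner]
      rw [he]
      exact (innerSL ℝ (gdRow X i)).hasFDerivAt.sub_const _
    have hsq := h0.mul h0
    have he2 : (fun b : EuclideanSpace ℝ (Fin m) => (X.mulVec b i - y i) ^ 2)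
        = fun b : EuclideanSpace ℝ (Fin m) => (X.mulVec b i - y i) * (X.mulVec b i - y i) := by
      funext b; ring
    rw [he2, two_mul, add_smul]
    exact hsq
  have hsum := HasFDerivAt.fun_sum (fun i (_ : i ∈ Finset.univ) => hF i)
  have hmul := hsum.const_mul (1 / (2 * (n : ℝ)))
  rw [hasGradientAt_iff_hasFDerivAt]
  convert hmul using 1
  · rfl
  apply ContinuousLinearMap.ext
  intro v
  simp only [InnerProductSpace.toDual_apply_apply, gdGrad, real_inner_smul_left, sum_inner,
    ContinuousLinearMap.smul_apply, ContinuousLinearMap.coe_sum', Finset.sum_apply,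
    innerSL_apply_apply, smul_eq_mul]
  rw [Finset.mul_sum, Finset.mul_sum]
  refine Finset.sum_congr rfl fun i _ => ?_
  rcases eq_or_ne (n : ℝ) 0 with h | h
  · simp [h]
  · field_simp

lemma gd_rayleigh {m : ℕ} {A : Matrix (Fin m) (Fin m) ℝ} (hA : A.IsHermitian)
    (v : EuclideanSpace ℝ (Fin m)) :
    v ⬝ᵥ (A *ᵥ v) ≤ (⨆ i, hA.eigenvalues i) * ‖v‖ ^ 2 := by
  rcases Nat.eq_zero_or_pos m with hm0 | hm
  · subst hm0
    have hv : ‖v‖ ^ 2 = 0 := by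
      simp [EuclideanSpace.norm_eq]
    simp [dotProduct, hv]
  have hAT : Aᵀ = A := by
    ext i j
    have := congrFun (congrFun hA.eq i) j
    simpa [Matrix.conjTranspose_apply] using this
  set b := hA.eigenvectorBasis with hb
  have hBdd : BddAbove (Set.range hA.eigenvalues) := (Set.finite_range _).bddAbove
  have hle : ∀ j, hA.eigenvalues j ≤ ⨆ i, hA.eigenvalues i := fun j => le_ciSup hBdd j
  have hsum : ∀ x w : EuclideanSpace ℝ (Fin m), ⟪x, w⟫ = x ⬝ᵥ w := by
    intro x w
    simp [PiLp.inner_apply, RCLike.inner_apply, dotProduct, mul_comm]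
  set w : EuclideanSpace ℝ (Fin m) := (WithLp.equiv 2 _).symm (A *ᵥ v) with hw
  have hw' : ∀ x : EuclideanSpace ℝ (Fin m), ⟪x, w⟫ = x ⬝ᵥ (A *ᵥ v) := by
    intro x; rw [hsum]; rfl
  have hbj : ∀ j, ⟪b j, w⟫ = hA.eigenvalues j * ⟪b j, v⟫ := by
    intro j
    rw [hw']
    have h1 : (b j : Fin m → ℝ) ⬝ᵥ (A *ᵥ v) = (A *ᵥ (b j : Fin m → ℝ)) ⬝ᵥ v := by
      rw [Matrix.dotProduct_mulVec, ← hAT, Matrix.vecMul_transpose, hAT]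
    have h2 : (A *ᵥ (b j : Fin m → ℝ)) = hA.eigenvalues j • (b j : Fin m → ℝ) :=
      hA.mulVec_eigenvectorBasis j
    rw [h1, h2, smul_dotProduct, hsum]
    rfl
  have key : v ⬝ᵥ (A *ᵥ v) = ∑ j, hA.eigenvalues j * (⟪b j, v⟫ * ⟪v, b j⟫) := by
    rw [← hw' v, ← b.sum_inner_mul_inner v w]
    refine Finset.sum_congr rfl fun j _ => ?_
    rw [hbj j]; ring
  rw [key]
  have hnorm : ∑ j, ⟪b j, v⟫ * ⟪v, b j⟫ = ‖v‖ ^ 2 := by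
    rw [← real_inner_self_eq_norm_sq v, ← b.sum_inner_mul_inner v v]
    exact Finset.sum_congr rfl fun j _ => by ring
  calc ∑ j, hA.eigenvalues j * (⟪b j, v⟫ * ⟪v, b j⟫)
      ≤ ∑ j, (⨆ i, hA.eigenvalues i) * (⟪b j, v⟫ * ⟪v, b j⟫) := by
        refine Finset.sum_le_sum fun j _ => ?_
        have hnn : 0 ≤ ⟪b j, v⟫ * ⟪v, b j⟫ := by
          rw [real_inner_comm (b j) v]; exact mul_self_nonneg _
        exact mul_le_mul_of_nonneg_right (hle j) hnn
    _ = (⨆ i, hA.eigenvalues i) * ‖v‖ ^ 2 := by rw [← Finset.mul_sum, hnorm]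

set_option maxHeartbeats 1000000 in
/-- Discrete-time early stopping for gradient descent on least squares (Theorem 2
specialized): with step size `0 < η ≤ n/λ_max(XᵀX)` and
`T = ⌈(‖α' − α_0‖²/2 + ηR_n(α'))/(ηε)⌉`, there is `t* ≤ T` with small excess risk plus
squared empirical distance, and the iterates up to `t*` stay in the expanded Euclidean ball. -/
theorem gradient_descent_early_stopping {n m : ℕ} (hn : 0 < n) (hm : 0 < m)
    (X : Matrix (Fin n) (Fin m) ℝ) (y : Fin n → ℝ)
    (Rn : EuclideanSpace ℝ (Fin m) → ℝ)
    (hRn : ∀ a, Rn a = 1 / (2 * n) * ∑ i, (X.mulVec a i - y i) ^ 2)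
    (gRn : EuclideanSpace ℝ (Fin m) → EuclideanSpace ℝ (Fin m))
    (hgRn : ∀ a, HasGradientAt Rn (gRn a) a)
    (hA : (Xᵀ * X).IsHermitian)
    (η : ℝ) (hη : 0 < η) (hηmax : η ≤ n / (⨆ i, hA.eigenvalues i))
    (α : ℕ → EuclideanSpace ℝ (Fin m))
    (hupd : ∀ t, α (t + 1) = α t - η • gRn (α t))
    (α' : EuclideanSpace ℝ (Fin m))
    (ε : ℝ) (hε : 0 < ε)
    (T : ℕ) (hT : T = ⌈(‖α' - α 0‖ ^ 2 / 2 + η * Rn α') / (η * ε)⌉₊) :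
    ∃ tstar ≤ T,
      (Rn (α tstar) - Rn α'
        + 1 / (2 * n) * ∑ i, (X.mulVec (α tstar) i - X.mulVec α' i) ^ 2 ≤ ε) ∧
      ∀ t, 1 ≤ t → t ≤ tstar →
        ‖α' - α t‖ ^ 2 / 2 ≤ ‖α' - α 0‖ ^ 2 / 2 + η * Rn α' := by
  classical
  have hn' : (0:ℝ) < n := by exact_mod_cast hn
  have hnne : (n:ℝ) ≠ 0 := ne_of_gt hn'
  have hgeq : ∀ a, gRn a = gdGrad X y a := by
    intro a
    refine (hgRn a).unique ?_
    have hfe : Rn = fun b : EuclideanSpace ℝ (Fin m) => 1 / (2 * (n:ℝ)) * ∑ i, (X.mulVec b i - y i) ^ 2 := funext hRn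
    rw [hfe]
    exact gd_hasGradient X y a
  have hinner : ∀ a w : EuclideanSpace ℝ (Fin m),
      ⟪gRn a, w⟫ = (n:ℝ)⁻¹ * ∑ i, (X.mulVec a i - y i) * X.mulVec w i := by
    intro a w
    rw [hgeq a]
    simp only [gdGrad, real_inner_smul_left, sum_inner, gdRow_inner]
  have hmv : ∀ (u v : EuclideanSpace ℝ (Fin m)) (i : Fin n),
      X.mulVec (u - v) i = X.mulVec u i - X.mulVec v i := by
    intro u v i
    have h := Matrix.mulVec_sub X (u : Fin m → ℝ) (v : Fin m → ℝ)
    exact congrFun h i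
  have hexp : ∀ a b : EuclideanSpace ℝ (Fin m),
      Rn b = Rn a + ⟪gRn a, b - a⟫ + 1 / (2 * n) * ∑ i, (X.mulVec b i - X.mulVec a i) ^ 2 := by
    intro a b
    rw [hRn, hRn, hinner]
    have e1 : ∑ i, (X.mulVec b i - y i) ^ 2
        = (∑ i, (X.mulVec a i - y i) ^ 2)
          + 2 * (∑ i, (X.mulVec a i - y i) * (X.mulVec (b - a) i))
          + ∑ i, (X.mulVec b i - X.mulVec a i) ^ 2 := by
      rw [Finset.mul_sum, ← Finset.sum_add_distrib, ← Finset.sum_add_distrib]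
      refine Finset.sum_congr rfl fun i _ => ?_
      rw [hmv b a i]; ring
    rw [e1]
    field_simp
    simp only [WithLp.ofLp_sub]
  have hRn0 : ∀ a, 0 ≤ Rn a := by
    intro a; rw [hRn a]; positivity
  set μ := ⨆ i, hA.eigenvalues i with hμ
  have hμpos : 0 < μ := by
    by_contra hcon
    push_neg at hcon
    have h0 : (n:ℝ) / μ ≤ 0 := by
      rcases lt_or_eq_of_le hcon with h | h
      · exact le_of_lt (div_neg_of_pos_of_neg hn' h)
      · rw [h, div_zero]
    linarith [hη.trans_le hηmax]
  have hημ : η * μ ≤ n := (le_div_iff₀ hμpos).mp hηmax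
  have hsmooth : ∀ v : EuclideanSpace ℝ (Fin m),
      ∑ i, (X.mulVec v i) ^ 2 ≤ μ * ‖v‖ ^ 2 := by
    intro v
    have h1 : ∑ i, (X.mulVec v i) ^ 2 = (v : Fin m → ℝ) ⬝ᵥ ((Xᵀ * X) *ᵥ (v : Fin m → ℝ)) := by
      rw [← Matrix.mulVec_mulVec, Matrix.dotProduct_mulVec, Matrix.vecMul_transpose]
      simp [dotProduct, pow_two]
    rw [h1]
    exact gd_rayleigh hA v
  have hstep : ∀ t : ℕ,
      ‖α' - α (t+1)‖ ^ 2 / 2 + η * Rn (α (t+1))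
        ≤ (‖α' - α t‖ ^ 2 / 2 + η * Rn (α t))
          - η * (Rn (α t) - Rn α'
            + 1 / (2 * n) * ∑ i, (X.mulVec (α t) i - X.mulVec α' i) ^ 2) := by
    intro t
    set g := gRn (α t) with hgdef
    have h1 : ⟪g, α t - α'⟫
        = Rn (α t) - Rn α' + 1 / (2 * n) * ∑ i, (X.mulVec (α t) i - X.mulVec α' i) ^ 2 := by
      have he := hexp (α t) α'
      have hflip : (1:ℝ) / (2 * n) * ∑ i, (X.mulVec α' i - X.mulVec (α t) i) ^ 2
          = 1 / (2 * n) * ∑ i, (X.mulVec (α t) i - X.mulVec α' i) ^ 2 := by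
        congr 1
        exact Finset.sum_congr rfl fun i _ => by ring
      have hneg : ⟪g, α' - α t⟫ = -⟪g, α t - α'⟫ := by
        rw [show α' - α t = -(α t - α') from (neg_sub (α t) α').symm, inner_neg_right]
      rw [hflip, hneg] at he
      linarith
    have hd : α (t+1) - α t = -(η • g) := by rw [hupd t]; abel
    have hmv2 : ∀ i, X.mulVec (α (t+1)) i - X.mulVec (α t) i = -(η * X.mulVec g i) := by
      intro i
      rw [← hmv (α (t+1)) (α t) i, ← WithLp.ofLp_sub, hd]
      have h4 : X.mulVec (-(η • (g : Fin m → ℝ))) = -(η • X.mulVec (g : Fin m → ℝ)) := by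
        rw [Matrix.mulVec_neg, Matrix.mulVec_smul]
      have := congrFun h4 i
      simpa using this
    have hsq : ∑ i, (X.mulVec (α (t+1)) i - X.mulVec (α t) i) ^ 2
        = η ^ 2 * ∑ i, (X.mulVec g i) ^ 2 := by
      rw [Finset.mul_sum]
      refine Finset.sum_congr rfl fun i _ => ?_
      rw [hmv2 i]; ring
    have h2 : Rn (α (t+1)) ≤ Rn (α t) - η / 2 * ‖g‖ ^ 2 := by
      have he := hexp (α t) (α (t+1))
      have hip : ⟪g, α (t+1) - α t⟫ = -(η * ‖g‖ ^ 2) := by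
        rw [hd, inner_neg_right, real_inner_smul_right, real_inner_self_eq_norm_sq]
      rw [hip, hsq] at he
      have hb : 1 / (2 * (n:ℝ)) * (η ^ 2 * ∑ i, (X.mulVec g i) ^ 2) ≤ η / 2 * ‖g‖ ^ 2 := by
        have hs := hsmooth g
        have h5 : η ^ 2 * ∑ i, (X.mulVec g i) ^ 2 ≤ η * n * ‖g‖ ^ 2 := by
          have h6 : η ^ 2 * ∑ i, (X.mulVec g i) ^ 2 ≤ η ^ 2 * (μ * ‖g‖ ^ 2) :=
            mul_le_mul_of_nonneg_left hs (sq_nonneg η)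
          have h7 : (η * μ) * (η * ‖g‖ ^ 2) ≤ (n:ℝ) * (η * ‖g‖ ^ 2) :=
            mul_le_mul_of_nonneg_right hημ (mul_nonneg hη.le (sq_nonneg _))
          nlinarith
        calc 1 / (2 * (n:ℝ)) * (η ^ 2 * ∑ i, (X.mulVec g i) ^ 2)
            ≤ 1 / (2 * (n:ℝ)) * (η * n * ‖g‖ ^ 2) := by
              apply mul_le_mul_of_nonneg_left h5
              positivity
          _ = η / 2 * ‖g‖ ^ 2 := by field_simp
      linarith
    have h3 : ‖α' - α (t+1)‖ ^ 2 / 2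
        = ‖α' - α t‖ ^ 2 / 2 - η * ⟪g, α t - α'⟫ + η ^ 2 * ‖g‖ ^ 2 / 2 := by
      have hsub2 : α' - α (t+1) = (α' - α t) + η • g := by rw [hupd t]; abel
      have hcomm : ⟪α' - α t, g⟫ = -⟪g, α t - α'⟫ := by
        rw [real_inner_comm, show α' - α t = -(α t - α') from (neg_sub (α t) α').symm,
          inner_neg_right]
      rw [hsub2, norm_add_sq_real, real_inner_smul_right, hcomm, norm_smul]
      simp only [Real.norm_eq_abs, mul_pow, sq_abs]
      ring
    have hmulh2 := mul_le_mul_of_nonneg_left h2 hη.le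
    have hexpand : η * (Rn (α t) - η / 2 * ‖g‖ ^ 2) = η * Rn (α t) - η ^ 2 * ‖g‖ ^ 2 / 2 := by
      ring
    rw [← h1]
    linarith
  have hW0 : ∀ t, (0:ℝ) ≤ ‖α' - α t‖ ^ 2 / 2 + η * Rn (α t) := by
    intro t
    have h1 : (0:ℝ) ≤ ‖α' - α t‖ ^ 2 / 2 := by positivity
    have h2 := mul_nonneg hη.le (hRn0 (α t))
    linarith
  have hQ0 : ∀ t, (0:ℝ) ≤ 1 / (2 * (n:ℝ)) * ∑ i, (X.mulVec (α t) i - X.mulVec α' i) ^ 2 := by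
    intro t; positivity
  have hW1 : ‖α' - α 1‖ ^ 2 / 2 + η * Rn (α 1) ≤ ‖α' - α 0‖ ^ 2 / 2 + η * Rn α' := by
    have h := hstep 0
    have hq := mul_nonneg hη.le (hQ0 0)
    have hr : η * (Rn (α 0) - Rn α'
        + 1 / (2 * (n:ℝ)) * ∑ i, (X.mulVec (α 0) i - X.mulVec α' i) ^ 2)
        = η * Rn (α 0) - η * Rn α'
          + η * (1 / (2 * (n:ℝ)) * ∑ i, (X.mulVec (α 0) i - X.mulVec α' i) ^ 2) := by ring
    linarith
  have hex : ∃ t, t ≤ T ∧ Rn (α t) - Rn α'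
      + 1 / (2 * n) * ∑ i, (X.mulVec (α t) i - X.mulVec α' i) ^ 2 ≤ ε := by
    by_contra hco
    push_neg at hco
    have hηε : 0 < η * ε := mul_pos hη hε
    have hceil : (‖α' - α 0‖ ^ 2 / 2 + η * Rn α') / (η * ε) ≤ (T:ℝ) := by
      rw [hT]; exact Nat.le_ceil _
    rcases Nat.eq_zero_or_pos T with hT0 | hTpos
    · have hCle : ‖α' - α 0‖ ^ 2 / 2 + η * Rn α' ≤ 0 := by
        rw [hT0] at hceil
        push_cast at hceil
        by_contra hc
        push_neg at hc
        have := div_pos hc hηε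
        linarith
      have h1 : (0:ℝ) ≤ ‖α' - α 0‖ ^ 2 / 2 := by positivity
      have h2 : (0:ℝ) ≤ η * Rn α' := mul_nonneg hη.le (hRn0 _)
      have hD0 : ‖α' - α 0‖ ^ 2 = 0 := by linarith
      have hα : α 0 = α' := by
        have h9 := pow_eq_zero_iff (n := 2) (by norm_num) |>.mp hD0
        exact (sub_eq_zero.mp (norm_eq_zero.mp h9)).symm
      have hco0 := hco 0 (Nat.zero_le T)
      rw [hα] at hco0
      simp at hco0
      linarith
    · have hchain : ∀ k, 1 ≤ k → k ≤ T →
          ‖α' - α (k+1)‖ ^ 2 / 2 + η * Rn (α (k+1))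
            < ‖α' - α 0‖ ^ 2 / 2 + η * Rn α' - (k:ℝ) * (η * ε) := by
        intro k hk1
        induction k, hk1 using Nat.le_induction with
        | base =>
          intro h1T
          have hs := hstep 1
          have hgt := hco 1 h1T
          have hmul := mul_lt_mul_of_pos_left hgt hη
          push_cast
          linarith
        | succ k hk ih =>
          intro hkT
          have hk' : k ≤ T := le_trans (Nat.le_succ k) hkT
          have ihh := ih hk'
          have hs := hstep (k+1)
          have hgt := hco (k+1) hkT
          have hmul := mul_lt_mul_of_pos_left hgt hη
          push_cast
          push_cast at ihh
          linarith
      have hfin := hchain T hTpos le_rfl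
      have hWT := hW0 (T+1)
      have hc2 : ‖α' - α 0‖ ^ 2 / 2 + η * Rn α' ≤ (T:ℝ) * (η * ε) := by
        rw [div_le_iff₀ hηε] at hceil
        linarith
      linarith
  obtain ⟨t0, ht0T, ht0⟩ := hex
  have hexists : ∃ t, Rn (α t) - Rn α'
      + 1 / (2 * n) * ∑ i, (X.mulVec (α t) i - X.mulVec α' i) ^ 2 ≤ ε := ⟨t0, ht0⟩
  refine ⟨Nat.find hexists, le_trans (Nat.find_le ht0) ht0T, Nat.find_spec hexists, ?_⟩
  intro t ht1 htts
  have hmono : ∀ s, 1 ≤ s → s ≤ Nat.find hexists →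
      ‖α' - α s‖ ^ 2 / 2 + η * Rn (α s) ≤ ‖α' - α 1‖ ^ 2 / 2 + η * Rn (α 1) := by
    intro s hs1
    induction s, hs1 using Nat.le_induction with
    | base => intro _; exact le_rfl
    | succ s hs ih =>
      intro hsT
      have hs' : s ≤ Nat.find hexists := le_trans (Nat.le_succ s) hsT
      have hlt : s < Nat.find hexists := lt_of_lt_of_le (Nat.lt_succ_self s) hsT
      have hes := Nat.find_min hexists hlt
      push_neg at hes
      have hstp := hstep s
      have hepos : 0 < Rn (α s) - Rn α'
          + 1 / (2 * (n:ℝ)) * ∑ i, (X.mulVec (α s) i - X.mulVec α' i) ^ 2 :=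
        lt_trans hε hes
      have := mul_pos hη hepos
      linarith [ih hs']
  have hD : (0:ℝ) ≤ η * Rn (α t) := mul_nonneg hη.le (hRn0 (α t))
  linarith [hmono t ht1 htts, hW1]
end

section
/- Let ψ : ℝ^m → ℝ be differentiable and ρ-strongly convex w.r.t. a norm ‖·‖, R : ℝ^m → ℝ differentiable, β-smooth w.r.t. ‖·‖, and convex. For the mirror descent step ∇ψ(α_{t+1}) = ∇ψ(α_t) − η∇R(α_t) with 0 < η ≤ ρ/β, the empirical risk is nonincreasing: R(α_{t+1}) ≤ R(α_t). -/
open scoped RealInnerProductSpace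

/-- Risk monotonicity of mirror descent: under `ρ`-strong convexity of `ψ`, `β`-smoothness
and convexity of `R` w.r.t. a norm `N`, and step size `0 < η ≤ ρ/β`, one mirror descent step
does not increase the empirical risk: `R(α_{t+1}) ≤ R(α_t)`. -/
theorem mirror_descent_risk_nonincreasing {m : ℕ}
    (ψ R : EuclideanSpace ℝ (Fin m) → ℝ)
    (gψ gR : EuclideanSpace ℝ (Fin m) → EuclideanSpace ℝ (Fin m))
    (hψgrad : ∀ x, HasGradientAt ψ (gψ x) x)
    (hRgrad : ∀ x, HasGradientAt R (gR x) x)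
    (hRconv : ConvexOn ℝ Set.univ R)
    (N : EuclideanSpace ℝ (Fin m) → ℝ)
    (hNsymm : ∀ v, N (-v) = N v)
    (Dψ : EuclideanSpace ℝ (Fin m) → EuclideanSpace ℝ (Fin m) → ℝ)
    (hD : ∀ a b, Dψ a b = ψ a - ψ b - ⟪gψ b, a - b⟫)
    (ρ β : ℝ) (hρ : 0 < ρ) (hβ : 0 < β)
    (hstrong : ∀ a b, Dψ a b ≥ ρ / 2 * N (a - b) ^ 2)
    (hsmooth : ∀ a b, R a ≤ R b + ⟪gR b, a - b⟫ + β / 2 * N (a - b) ^ 2)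
    (η : ℝ) (hη : 0 < η) (hηβ : η ≤ ρ / β)
    (αt αt1 : EuclideanSpace ℝ (Fin m))
    (hupdate : gψ αt1 = gψ αt - η • gR αt) :
    R αt1 ≤ R αt := by
  have hs := hsmooth αt1 αt
  have h1 := hstrong αt1 αt
  have h2 := hstrong αt αt1
  rw [hD] at h1 h2
  have hNe : N (αt - αt1) = N (αt1 - αt) := by
    rw [← hNsymm (αt1 - αt), neg_sub]
  have hsnn : 0 ≤ N (αt1 - αt) ^ 2 := sq_nonneg _
  have key : ⟪gψ αt - gψ αt1, αt - αt1⟫ = η * ⟪gR αt, αt - αt1⟫ := by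
    rw [hupdate]
    simp [inner_sub_left, real_inner_smul_left, Finset.mul_sum, mul_assoc]
  have expand : ⟪gψ αt - gψ αt1, αt - αt1⟫ =
      (ψ αt1 - ψ αt - ⟪gψ αt, αt1 - αt⟫) + (ψ αt - ψ αt1 - ⟪gψ αt1, αt - αt1⟫) := by
    have h : (αt1 - αt) = -(αt - αt1) := by abel
    rw [inner_sub_left, h, inner_neg_right]
    ring
  have hsum : ρ * N (αt1 - αt) ^ 2 ≤ η * ⟪gR αt, αt - αt1⟫ := by
    rw [← key, expand]
    rw [hNe] at h2
    linarith
  have hx : ⟪gR αt, αt1 - αt⟫ = -⟪gR αt, αt - αt1⟫ := by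
    have h : (αt1 - αt) = -(αt - αt1) := by abel
    rw [h, inner_neg_right]
  rw [hx] at hs
  have hηβ' : η * β ≤ ρ := (le_div_iff₀ hβ).mp hηβ
  nlinarith [mul_le_mul_of_nonneg_left hs (le_of_lt hη)]
end
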